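/- Let α be an algebraic number with 0 < α < 1 such that the additive monoid N₀[α] is atomic. Then every atom of N₀[α] has infinite omega-primality; that is, N₀[α] is an anti-prime monoid. -/

import Mathlib

/-- `N₀[α]`: the additive submonoid of ℝ generated by the powers of `α`. -/
def Nmon (α : ℝ) : AddSubmonoid ℝ := AddSubmonoid.closure (Set.range fun n : ℕ => α ^ n)

/-- `a` is an atom of the submonoid `M`. -/
def IsAtomOf (M : AddSubmonoid ℝ) (a : ℝ) : Prop :=
  a ∈ M ∧ a ≠ 0 ∧ ∀ b c : ℝ, b ∈ M → c ∈ M → a = b + c → b = 0 ∨ c = 0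

/-- `M` is atomic: every nonzero element is a sum of atoms. -/
def IsAtomicM (M : AddSubmonoid ℝ) : Prop :=
  ∀ x ∈ M, x ≠ 0 → ∃ S : Multiset ℝ, (∀ a ∈ S, IsAtomOf M a) ∧ S.sum = x

/-- Divisibility in the submonoid `M`. -/
def DvdM (M : AddSubmonoid ℝ) (x y : ℝ) : Prop := ∃ z ∈ M, y = x + z

namespace Stmt2Aux
variable {α : ℝ}

lemma powMem (n : ℕ) : α ^ n ∈ Nmon α := AddSubmonoid.subset_closure ⟨n, rfl⟩

lemma msum_mem (L : Multiset ℕ) : (L.map (α ^ ·)).sum ∈ Nmon α := by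
  induction L using Multiset.induction with
  | empty => simpa using (Nmon α).zero_mem
  | cons a s ih =>
    rw [Multiset.map_cons, Multiset.sum_cons]
    exact (Nmon α).add_mem (powMem a) ih

lemma nonneg (h0 : 0 ≤ α) {x : ℝ} (hx : x ∈ Nmon α) : 0 ≤ x := by
  induction hx using AddSubmonoid.closure_induction with
  | mem x hx => obtain ⟨n, rfl⟩ := hx; exact pow_nonneg h0 n
  | zero => exact le_refl 0
  | add x y hx hy px py => exact add_nonneg px py


lemma strip (hα : α ≠ 0) : ∀ n : ℕ, ∀ p : Polynomial ℤ, p.natDegree ≤ n → p ≠ 0 →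
    Polynomial.aeval α p = 0 →
    ∃ q : Polynomial ℤ, q ≠ 0 ∧ Polynomial.aeval α q = 0 ∧ q.coeff 0 ≠ 0 := by
  intro n
  induction n with
  | zero =>
    intro p hd hp hev
    refine ⟨p, hp, hev, fun hc => hp ?_⟩
    rw [Polynomial.eq_C_of_natDegree_le_zero hd, hc, map_zero]
  | succ n ih =>
    intro p hd hp hev
    by_cases hc : p.coeff 0 = 0
    · have hp' : p = Polynomial.X * p.divX := by
        conv_lhs => rw [← Polynomial.X_mul_divX_add p]
        rw [hc, map_zero, add_zero]
      have hdx : p.divX ≠ 0 := fun h => hp (by rw [hp', h, mul_zero])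
      have hev' : Polynomial.aeval α p.divX = 0 := by
        rw [hp', map_mul, Polynomial.aeval_X, mul_eq_zero] at hev
        exact hev.resolve_left hα
      refine ih p.divX ?_ hdx hev'
      have := Polynomial.natDegree_divX_eq_natDegree_tsub_one (p := p)
      omega
    · exact ⟨p, hp, hev, hc⟩

/-- The basic relation: `∑ c i α^i = ∑ e i α^i` with `c 0 ≥ 1`, `e 0 = 0`. -/
lemma relation (halg : IsAlgebraic ℚ α) (hα : α ≠ 0) :
    ∃ (N : ℕ) (c e : ℕ → ℕ), 0 < c 0 ∧ e 0 = 0 ∧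
      ∑ i ∈ Finset.range (N + 1), (c i : ℝ) * α ^ i
        = ∑ i ∈ Finset.range (N + 1), (e i : ℝ) * α ^ i := by
  have halgZ : IsAlgebraic ℤ α := (IsFractionRing.isAlgebraic_iff ℤ ℚ ℝ).mpr halg
  obtain ⟨p, hp, hev⟩ := halgZ
  obtain ⟨q, hq, hqev, hq0⟩ := strip hα p.natDegree p le_rfl hp hev
  -- make constant coefficient positive
  obtain ⟨q, hq, hqev, hq0⟩ : ∃ q : Polynomial ℤ, q ≠ 0 ∧ Polynomial.aeval α q = 0 ∧
      0 < q.coeff 0 := by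
    rcases lt_or_gt_of_ne hq0 with h | h
    · exact ⟨-q, neg_ne_zero.mpr hq, by rw [map_neg, hqev, neg_zero], by simpa using h⟩
    · exact ⟨q, hq, hqev, h⟩
  refine ⟨q.natDegree, fun i => (q.coeff i).toNat, fun i => (-(q.coeff i)).toNat,
    show 0 < (q.coeff 0).toNat by omega, show (-(q.coeff 0)).toNat = 0 by omega, ?_⟩
  have key : ∀ i : ℕ, ((q.coeff i).toNat : ℝ) - ((-(q.coeff i)).toNat : ℝ) = (q.coeff i : ℝ) := by
    intro i
    have : ((q.coeff i).toNat : ℤ) - ((-(q.coeff i)).toNat : ℤ) = q.coeff i := by omega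
    exact_mod_cast congrArg (fun z : ℤ => (z : ℝ)) this
  rw [← sub_eq_zero, ← Finset.sum_sub_distrib]
  have h2 : ∑ i ∈ Finset.range (q.natDegree + 1), (q.coeff i : ℝ) * α ^ i = 0 := by
    have h3 := Polynomial.aeval_eq_sum_range (R := ℤ) (p := q) α
    rw [hqev] at h3
    simpa [zsmul_eq_mul] using h3.symm
  rw [← h2]
  refine Finset.sum_congr rfl fun i _ => ?_
  rw [← sub_mul, key]

/-- Convert a `Finset.range` sum of natural multiples of powers into a multiset sum. -/
lemma range_sum_eq (N : ℕ) (k g : ℕ → ℕ) :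
    ∃ L : Multiset ℕ, (∀ e ∈ L, ∃ i, i < N ∧ e = g i) ∧
      (L.map (α ^ ·)).sum = ∑ i ∈ Finset.range N, (k i : ℝ) * α ^ g i := by
  refine ⟨(Finset.range N).val.bind fun i => Multiset.replicate (k i) (g i), ?_, ?_⟩
  · intro e he
    rw [Multiset.mem_bind] at he
    obtain ⟨i, hi, he⟩ := he
    rw [Multiset.eq_of_mem_replicate he]
    exact ⟨i, Finset.mem_range.mp hi, rfl⟩
  · rw [Multiset.map_bind, Multiset.sum_bind]
    rw [Finset.sum]
    simp [Multiset.map_replicate, Multiset.sum_replicate, Finset.sum, nsmul_eq_mul]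

lemma collect (K : ℕ) (L₀ : Multiset ℕ)
    (IH : ∀ e ∈ L₀, ∃ z ∈ Nmon α, ∃ L : Multiset ℕ, (∀ e' ∈ L, K < e') ∧
      α ^ e + z = (L.map (α ^ ·)).sum) :
    ∃ z ∈ Nmon α, ∃ L : Multiset ℕ, (∀ e' ∈ L, K < e') ∧
      (L₀.map (α ^ ·)).sum + z = (L.map (α ^ ·)).sum := by
  induction L₀ using Multiset.induction with
  | empty => exact ⟨0, (Nmon α).zero_mem, 0, by simp, by simp⟩
  | cons e L₀' ih =>
    obtain ⟨z₁, hz₁, L₁, hL₁, hs₁⟩ := IH e (Multiset.mem_cons_self e L₀')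
    obtain ⟨z₂, hz₂, L₂, hL₂, hs₂⟩ := ih fun e' he' => IH e' (Multiset.mem_cons_of_mem he')
    refine ⟨z₁ + z₂, (Nmon α).add_mem hz₁ hz₂, L₁ + L₂, ?_, ?_⟩
    · intro e' he'
      rcases Multiset.mem_add.mp he' with h | h
      exacts [hL₁ e' h, hL₂ e' h]
    · rw [Multiset.map_cons, Multiset.sum_cons, Multiset.map_add, Multiset.sum_add,
        ← hs₁, ← hs₂]
      ring

lemma push (h0 : 0 < α) (h1 : α < 1) (halg : IsAlgebraic ℚ α) (K : ℕ) :
    ∀ d r : ℕ, K + 1 - r ≤ d → ∃ z ∈ Nmon α, ∃ L : Multiset ℕ,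
      (∀ e ∈ L, K < e) ∧ α ^ r + z = (L.map (α ^ ·)).sum := by
  obtain ⟨N, c, e, hc0, he0, hrel⟩ := relation halg h0.ne'
  intro d
  induction d with
  | zero =>
    intro r hr
    exact ⟨0, (Nmon α).zero_mem, {r}, by intro e' he'; simp at he'; omega, by simp⟩
  | succ d ih =>
    intro r hr
    by_cases hKr : K < r
    · exact ⟨0, (Nmon α).zero_mem, {r}, by intro e' he'; simp at he'; omega, by simp⟩
    -- shifted relation
    have hshift : ∑ i ∈ Finset.range (N + 1), (c i : ℝ) * α ^ (i + r)
        = ∑ i ∈ Finset.range (N + 1), (e i : ℝ) * α ^ (i + r) := by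
      have := congrArg (fun x : ℝ => x * α ^ r) hrel
      simpa [Finset.sum_mul, mul_assoc, pow_add] using this
    rw [Finset.sum_range_succ' _ N, Finset.sum_range_succ' _ N] at hshift
    -- hshift : ∑ i<N, c(i+1) α^(i+1+r) + c 0 α^(0+r) = ∑ i<N, e(i+1) α^(i+1+r) + e 0 α^(0+r)
    have he00 : ((e 0 : ℝ)) * α ^ (0 + r) = 0 := by rw [he0]; simp
    have hc0' : (c 0 : ℝ) * α ^ (0 + r) = α ^ r + ((c 0 - 1 : ℕ) : ℝ) * α ^ r := by
      have : ((c 0 : ℝ)) = 1 + ((c 0 - 1 : ℕ) : ℝ) := by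
        have : (1 : ℕ) ≤ c 0 := hc0
        push_cast [Nat.cast_sub this]
        ring
      rw [this, zero_add]; ring
    obtain ⟨L₀, hL₀mem, hL₀sum⟩ := range_sum_eq (α := α) N (fun i => e (i + 1)) (fun i => i + 1 + r)
    -- get the equation : α ^ r + z₀ = (L₀.map (α^·)).sum
    have hz₀mem : (((c 0 - 1 : ℕ) : ℝ) * α ^ r
        + ∑ i ∈ Finset.range N, (c (i + 1) : ℝ) * α ^ (i + 1 + r)) ∈ Nmon α := by
      refine (Nmon α).add_mem ?_ (AddSubmonoid.sum_mem _ fun i _ => ?_)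
      · rw [← nsmul_eq_mul]; exact nsmul_mem (powMem r) _
      · rw [← nsmul_eq_mul]; exact nsmul_mem (powMem (i + 1 + r)) _
    have heq : α ^ r + (((c 0 - 1 : ℕ) : ℝ) * α ^ r
        + ∑ i ∈ Finset.range N, (c (i + 1) : ℝ) * α ^ (i + 1 + r))
        = (L₀.map (α ^ ·)).sum := by
      rw [hL₀sum]
      rw [he00, add_zero, hc0'] at hshift
      linarith [hshift]
    -- recurse on each element of L₀
    obtain ⟨z₂, hz₂, L, hL, hsum⟩ := collect K L₀ (fun e' he' => by
      obtain ⟨i, _, rfl⟩ := hL₀mem e' he'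
      exact ih (i + 1 + r) (by omega))
    refine ⟨_ + z₂, (Nmon α).add_mem hz₀mem hz₂, L, hL, ?_⟩
    rw [← add_assoc, heq, hsum]

lemma atom_is_pow (h0 : 0 < α) {a : ℝ} (ha : IsAtomOf (Nmon α) a) : ∃ s : ℕ, a = α ^ s := by
  obtain ⟨haM, ha0, hsplit⟩ := ha
  obtain ⟨l, hl, hsum⟩ := AddSubmonoid.exists_multiset_of_mem_closure haM
  induction l using Multiset.induction with
  | empty => exact absurd hsum.symm ha0
  | cons b l' _ =>
    rw [Multiset.sum_cons] at hsum
    obtain ⟨e, rfl⟩ := hl b (Multiset.mem_cons_self b l')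
    have hl'M : l'.sum ∈ Nmon α := AddSubmonoid.multiset_sum_mem _ _ fun y hy =>
      AddSubmonoid.subset_closure (hl y (Multiset.mem_cons_of_mem hy))
    rcases hsplit _ _ (powMem e) hl'M hsum.symm with h | h
    · exact absurd h (pow_ne_zero e h0.ne')
    · exact ⟨e, by rw [← hsum, h, add_zero]⟩

/-- Extract exponents from a multiset of powers. -/
lemma extract (k : ℕ) : ∀ S : Multiset ℝ, (∀ x ∈ S, ∃ e : ℕ, k < e ∧ x = α ^ e) →
    ∃ F : Multiset ℕ, (∀ f ∈ F, k < f) ∧ Multiset.card F = Multiset.card S ∧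
      (F.map (α ^ ·)).sum = S.sum := by
  intro S
  induction S using Multiset.induction with
  | empty => exact fun _ => ⟨0, by simp, by simp, by simp⟩
  | cons x S' ih =>
    intro hS
    obtain ⟨e, hke, rfl⟩ := hS x (Multiset.mem_cons_self x S')
    obtain ⟨F', h1, h2, h3⟩ := ih fun y hy => hS y (Multiset.mem_cons_of_mem hy)
    refine ⟨e ::ₘ F', ?_, by simp [h2], by simp [Multiset.sum_cons, h3]⟩
    intro f hf
    rcases Multiset.mem_cons.mp hf with h | h
    · exact h ▸ hke
    · exact h1 f h

lemma mul_pow_sum (s : ℕ) (G : Multiset ℕ) :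
    α ^ s * (G.map (α ^ ·)).sum = ((G.map (· + s)).map (α ^ ·)).sum := by
  induction G using Multiset.induction with
  | empty => simp
  | cons g G' ih =>
    simp only [Multiset.map_cons, Multiset.sum_cons, mul_add, ih, pow_add]
    ring_nf

lemma msum_pos (h0 : 0 < α) {G : Multiset ℕ} (hG : G ≠ 0) : 0 < (G.map (α ^ ·)).sum := by
  obtain ⟨g, hg⟩ := Multiset.exists_mem_of_ne_zero hG
  obtain ⟨G', hG'⟩ := Multiset.exists_cons_of_mem hg
  rw [hG', Multiset.map_cons, Multiset.sum_cons]
  have := nonneg h0.le (msum_mem (α := α) G')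
  have := pow_pos h0 g
  linarith

lemma no_atoms (h0 : 0 < α) (h1 : α < 1) {G : Multiset ℕ} (hcard : 2 ≤ Multiset.card G)
    (hsum : (G.map (α ^ ·)).sum = 1) (hat : IsAtomicM (Nmon α)) : False := by
  obtain ⟨S, hS, hSsum⟩ := hat 1 (by simpa using powMem (α := α) 0) one_ne_zero
  have hSne : S ≠ 0 := by rintro rfl; simp at hSsum
  obtain ⟨a, ha⟩ := Multiset.exists_mem_of_ne_zero hSne
  have haAtom := hS a ha
  obtain ⟨s, rfl⟩ := atom_is_pow h0 haAtom
  -- decompose G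
  have hGne : G ≠ 0 := by rintro rfl; simp at hcard
  obtain ⟨g₀, hg₀⟩ := Multiset.exists_mem_of_ne_zero hGne
  obtain ⟨G₂, hG₂eq⟩ := Multiset.exists_cons_of_mem hg₀
  have hG₂ : G₂ ≠ 0 := by
    rintro rfl
    rw [hG₂eq] at hcard
    simp at hcard
  -- α ^ s = α ^ (g₀ + s) + rest
  have key : α ^ s = α ^ (g₀ + s) + ((G₂.map (· + s)).map (α ^ ·)).sum := by
    have h6 := mul_pow_sum (α := α) s G
    rw [hsum, mul_one] at h6
    rw [h6, hG₂eq]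
    simp [Multiset.map_cons, Multiset.sum_cons, Nat.add_comm]
  rcases haAtom.2.2 _ _ (powMem (g₀ + s)) (msum_mem _) key with h | h
  · exact pow_ne_zero _ h0.ne' h
  · have : 0 < ((G₂.map (· + s)).map (α ^ ·)).sum :=
      msum_pos h0 (by simpa using hG₂)
    linarith [h ▸ this]

lemma pow_is_atom (h0 : 0 < α) (h1 : α < 1) (hat : IsAtomicM (Nmon α)) (k : ℕ) :
    IsAtomOf (Nmon α) (α ^ k) := by
  refine ⟨powMem k, pow_ne_zero k h0.ne', ?_⟩
  intro b c hb hc habc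
  by_contra hcon
  push_neg at hcon
  obtain ⟨hb0, hc0⟩ := hcon
  have hbpos : 0 < b := lt_of_le_of_ne (nonneg h0.le hb) (Ne.symm hb0)
  have hcpos : 0 < c := lt_of_le_of_ne (nonneg h0.le hc) (Ne.symm hc0)
  obtain ⟨Sb, hSb, hSbsum⟩ := hat b hb hb0
  obtain ⟨Sc, hSc, hScsum⟩ := hat c hc hc0
  set S := Sb + Sc with hSdef
  have hSsum : S.sum = α ^ k := by rw [hSdef, Multiset.sum_add, hSbsum, hScsum, habc]
  have hSatom : ∀ x ∈ S, IsAtomOf (Nmon α) x := by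
    intro x hx
    rcases Multiset.mem_add.mp hx with h | h
    exacts [hSb x h, hSc x h]
  have hSbne : Sb ≠ 0 := by rintro rfl; simp at hSbsum; exact hb0 hSbsum.symm
  have hScne : Sc ≠ 0 := by rintro rfl; simp at hScsum; exact hc0 hScsum.symm
  have hcard : 2 ≤ Multiset.card S := by
    rw [hSdef, Multiset.card_add]
    have := Multiset.card_pos.mpr hSbne
    have := Multiset.card_pos.mpr hScne
    omega
  -- every element of S is a power with exponent > k
  have hexp : ∀ x ∈ S, ∃ e : ℕ, k < e ∧ x = α ^ e := by
    intro x hx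
    obtain ⟨e, rfl⟩ := atom_is_pow h0 (hSatom x hx)
    refine ⟨e, ?_, rfl⟩
    -- α ^ e < α ^ k
    obtain ⟨S', hS'eq⟩ := Multiset.exists_cons_of_mem hx
    have hSsum' : α ^ e + S'.sum = α ^ k := by
      rw [← Multiset.sum_cons, ← hS'eq, hSsum]
    have hS'pos : 0 < S'.sum := by
      have hS'ne : S' ≠ 0 := by
        rintro rfl
        rw [hS'eq] at hcard
        simp at hcard
      obtain ⟨y, hy⟩ := Multiset.exists_mem_of_ne_zero hS'ne
      have hyS : y ∈ S := by rw [hS'eq]; exact Multiset.mem_cons_of_mem hy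
      have hyatom := hSatom y hyS
      have hypos : 0 < y := lt_of_le_of_ne (nonneg h0.le hyatom.1) (Ne.symm hyatom.2.1)
      obtain ⟨S'', hS''eq⟩ := Multiset.exists_cons_of_mem hy
      have h7 : 0 ≤ S''.sum := by
        refine nonneg h0.le (AddSubmonoid.multiset_sum_mem _ _ fun z hz => ?_)
        have hzS : z ∈ S := by
          rw [hS'eq]
          exact Multiset.mem_cons_of_mem (hS''eq ▸ Multiset.mem_cons_of_mem hz)
        exact (hSatom z hzS).1
      rw [hS''eq, Multiset.sum_cons]
      linarith
    have hlt : α ^ e < α ^ k := by linarith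
    exact (pow_lt_pow_iff_right_of_lt_one₀ h0 h1).mp hlt
  obtain ⟨F, hF1, hF2, hF3⟩ := extract k S hexp
  -- divide by α ^ k : 1 = sum over F.map (· - k)
  have hdiv : ((F.map (· - k)).map (α ^ ·)).sum = 1 := by
    have h5 : α ^ k * (((F.map (· - k)).map (α ^ ·)).sum) = α ^ k * 1 := by
      rw [mul_pow_sum, mul_one]
      have h8 : (F.map (· - k)).map (· + k) = F := by
        rw [Multiset.map_map]
        conv_rhs => rw [← Multiset.map_id F]
        refine Multiset.map_congr rfl fun f hf => ?_
        have := hF1 f hf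
        simp only [Function.comp_apply, id]
        omega
      rw [h8, hF3, hSsum]
    exact mul_left_cancel₀ (pow_ne_zero k h0.ne') h5
  have hcardF : 2 ≤ Multiset.card (F.map (· - k)) := by
    rw [Multiset.card_map, hF2]
    exact hcard
  exact no_atoms h0 h1 hcardF hdiv hat

end Stmt2Aux

/-- For an algebraic `α` with `0 < α < 1` and `N₀[α]` atomic, every atom of `N₀[α]` has
infinite omega-primality: for every `n` there is a (multiset) sum of atoms divisible by the
atom such that no subsum of at most `n` of them is divisible by it. -/
theorem stmt2 (α : ℝ) (halg : IsAlgebraic ℚ α) (h0 : 0 < α) (h1 : α < 1)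
    (hat : IsAtomicM (Nmon α)) :
    ∀ a : ℝ, IsAtomOf (Nmon α) a → ∀ n : ℕ,
      ∃ T : Multiset ℝ, (∀ b ∈ T, IsAtomOf (Nmon α) b) ∧ DvdM (Nmon α) a T.sum ∧
        ∀ S ≤ T, Multiset.card S ≤ n → ¬ DvdM (Nmon α) a S.sum := by
  intro a ha n
  obtain ⟨s, rfl⟩ := Stmt2Aux.atom_is_pow h0 ha
  obtain ⟨m, hm⟩ := exists_pow_lt_of_lt_one (x := α ^ s / (n + 1)) (by positivity) h1
  obtain ⟨z, hz, L, hL, hsum⟩ := Stmt2Aux.push h0 h1 halg m (m + 1) s (by omega)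
  refine ⟨L.map (α ^ ·), ?_, ⟨z, hz, hsum.symm⟩, ?_⟩
  · intro b hb
    obtain ⟨e, _, rfl⟩ := Multiset.mem_map.mp hb
    exact Stmt2Aux.pow_is_atom h0 h1 hat e
  · rintro S hS hcard ⟨z', hz', hz'eq⟩
    have hz'0 : 0 ≤ z' := Stmt2Aux.nonneg h0.le hz'
    have hbound : ∀ x ∈ S, x ≤ α ^ m := by
      intro x hx
      obtain ⟨e, he, rfl⟩ := Multiset.mem_map.mp (Multiset.mem_of_le hS hx)
      exact pow_le_pow_of_le_one h0.le h1.le (hL e he).le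
    have hA : S.sum ≤ (Multiset.card S) • (α ^ m) := Multiset.sum_le_card_nsmul S _ hbound
    have hB : (Multiset.card S) • (α ^ m) ≤ n • (α ^ m) :=
      nsmul_le_nsmul_left (pow_nonneg h0.le m) hcard
    simp only [nsmul_eq_mul] at hA hB
    have hC : ((n : ℝ) + 1) * α ^ m < α ^ s := by
      rw [mul_comm, ← lt_div_iff₀ (by positivity)]
      exact hm
    have hD : ((n : ℝ) + 1) * α ^ m = (n : ℝ) * α ^ m + α ^ m := by ring
    have hαm : 0 < α ^ m := pow_pos h0 m
    have hA' : S.sum ≤ (n : ℝ) * α ^ m := le_trans hA hB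
    linarith
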